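/- Let A ∈ Z^{t×(t+c-1)} be a degree matrix with all rows equal to (a_1,...,a_{t+c-1}), a_i ≥ 1. Then hp^A(z) equals the generating function Σ_i f_i(Γ) z^i of the pure order ideal Γ in monomials in variables y_1,...,y_c generated by the monomials y_1^{(Σ_{i=1}^{l_1-1} a_i)-1} y_2^{(Σ_{i=l_1}^{l_2-1} a_i)-1} ⋯ y_c^{(Σ_{i=l_{c-1}}^{t+c-1} a_i)-1} over all sequences 1 = l_0 < l_1 < ... < l_{c-1} ≤ t+c-1. In particular the h-vector of A is a pure O-sequence. -/

import Mathlib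

open Polynomial

/-- The polynomial `1 + z + ⋯ + z^(d-1)`. -/
noncomputable def geom (d : ℤ) : Polynomial ℤ :=
  ∑ i ∈ Finset.range d.toNat, Polynomial.X ^ i

/-- The h-polynomial of a standard determinantal ideal with `t × m` degree matrix `A`
(codimension `m - t + 1`), defined via the basic-double-link recursion applied at the
bottom-right entry, with the conventions `hp = 0` for `t = 0` and `hp = 1` for `m < t`. -/
noncomputable def hp : (t m : ℕ) → Matrix (Fin t) (Fin m) ℤ → Polynomial ℤ
  | 0, _, _ => 0
  | _ + 1, 0, _ => 1
  | t + 1, m + 1, A =>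
    if m + 1 ≤ t then 1
    else
      Polynomial.X ^ (A (Fin.last t) (Fin.last m)).toNat *
          hp t m (fun i j => A i.castSucc j.castSucc) +
        geom (A (Fin.last t) (Fin.last m)) * hp (t + 1) m (fun i j => A i j.castSucc)
  termination_by t m => (t, m)

/-- Delete row `k` and column `l` of a matrix. -/
def delRC {t m : ℕ} (A : Matrix (Fin (t + 1)) (Fin (m + 1)) ℤ)
    (k : Fin (t + 1)) (l : Fin (m + 1)) : Matrix (Fin t) (Fin m) ℤ :=
  fun i j => A (k.succAbove i) (l.succAbove j)

/-- Delete column `l` of a matrix. -/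
def delC {t m : ℕ} (A : Matrix (Fin t) (Fin (m + 1)) ℤ) (l : Fin (m + 1)) :
    Matrix (Fin t) (Fin m) ℤ :=
  fun i j => A i (l.succAbove j)

/-- `A` is a degree matrix: homogeneous (`a_{i,j} = b_j - a_i`), entries weakly increasing
left-to-right and bottom-to-top, and positive on the main diagonal. -/
def IsDegreeMatrix {a b : ℕ} (A : Matrix (Fin a) (Fin b) ℤ) : Prop :=
  (∃ (α : Fin a → ℤ) (β : Fin b → ℤ), ∀ i j, A i j = β j - α i) ∧
    (∀ (i : Fin a) (j j' : Fin b), j ≤ j' → A i j ≤ A i j') ∧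
    (∀ (i i' : Fin a) (j : Fin b), i ≤ i' → A i' j ≤ A i j) ∧
    (∀ (i : Fin a) (h : (i : ℕ) < b), 0 < A i ⟨i, h⟩)

/-- Binomial coefficient with integer top argument, with the convention that it vanishes
whenever the top argument is negative or smaller than the bottom one. -/
def ch (a : ℤ) (b : ℕ) : ℤ := if a < 0 then 0 else (a.toNat).choose b

/-- `h : ℕ → ℤ` is a pure O-sequence: it is the f-vector (counting monomials by degree)
of a nonempty finite order ideal of monomials all of whose maximal elements have the
same degree. -/
def IsPureOSequence (h : ℕ → ℤ) : Prop :=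
  ∃ (N : ℕ) (Γ : Finset (Fin N → ℕ)),
    Γ.Nonempty ∧
      (∀ μ ∈ Γ, ∀ ν : Fin N → ℕ, ν ≤ μ → ν ∈ Γ) ∧
      (∃ d : ℕ, ∀ μ ∈ Γ, (∀ ν ∈ Γ, μ ≤ ν → μ = ν) → ∑ j, μ j = d) ∧
      (∀ i : ℕ, ((Γ.filter fun μ => ∑ j, μ j = i).card : ℤ) = h i)

/-! ### Auxiliary combinatorics -/

open Finset

/-- Generators of the pure order ideal. -/
def Gen (t c : ℕ) (a : ℕ → ℤ) : Set (Fin (c + 1) → ℕ) :=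
  {μ | ∃ l : Fin (c + 2) → ℕ, StrictMono l ∧ l 0 = 1 ∧
    l (Fin.last (c + 1)) = t + c + 2 ∧
    ∀ k : Fin (c + 1),
      μ k = ((∑ i ∈ Finset.Ico (l k.castSucc) (l k.succ), a i) - 1).toNat}

/-- The order ideal generated by `Gen`. -/
def Idl (t c : ℕ) (a : ℕ → ℤ) : Set (Fin (c + 1) → ℕ) :=
  {μ | ∃ g ∈ Gen t c a, μ ≤ g}

lemma fin_sm_le {n : ℕ} {l : Fin (n + 1) → ℕ} (hl : StrictMono l) (k : Fin (n + 1)) :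
    l 0 + (k : ℕ) ≤ l k := by
  induction k using Fin.induction with
  | zero => simp
  | succ i ih =>
    have h1 : l i.castSucc < l i.succ := hl Fin.castSucc_lt_succ
    have h2 : ((i.castSucc : Fin (n+1)) : ℕ) = (i : ℕ) := rfl
    have h3 : ((i.succ : Fin (n+1)) : ℕ) = (i : ℕ) + 1 := rfl
    omega

lemma sum_Ico_ge {a : ℕ → ℤ} {N u v : ℕ} (ha : ∀ i, 1 ≤ i → i ≤ N → 1 ≤ a i)
    (hu : 1 ≤ u) (hv : v ≤ N + 1) : ((v - u : ℕ) : ℤ) ≤ ∑ i ∈ Finset.Ico u v, a i := by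
  have := Finset.card_nsmul_le_sum (Finset.Ico u v) a 1 (by
    intro x hx
    rw [Finset.mem_Ico] at hx
    exact ha x (le_trans hu hx.1) (by omega))
  simpa [Nat.card_Ico] using this

lemma sum_Ico_mono {a : ℕ → ℤ} {N u v w : ℕ} (ha : ∀ i, 1 ≤ i → i ≤ N → 1 ≤ a i)
    (hu : 1 ≤ u) (hvw : v ≤ w) (hw : w ≤ N + 1) :
    ∑ i ∈ Finset.Ico u v, a i ≤ ∑ i ∈ Finset.Ico u w, a i := by
  apply Finset.sum_le_sum_of_subset_of_nonneg (Finset.Ico_subset_Ico le_rfl hvw)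
  intro i hi _
  rw [Finset.mem_Ico] at hi
  have := ha i (le_trans hu hi.1) (by omega)
  omega

lemma strictMono_update_last {n : ℕ} {l : Fin (n + 1) → ℕ} (hl : StrictMono l) {b : ℕ}
    (hb : ∀ i : Fin (n + 1), i < Fin.last n → l i < b) :
    StrictMono (Function.update l (Fin.last n) b) := by
  intro i j hij
  rcases eq_or_ne j (Fin.last n) with rfl | hj
  · rw [Function.update_of_ne (ne_of_lt hij), Function.update_self]
    exact hb i hij
  · have hjl : j < Fin.last n := lt_of_le_of_ne (Fin.le_last j) hj
    have hi : i ≠ Fin.last n := ne_of_lt (lt_trans hij hjl)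
    rw [Function.update_of_ne hi, Function.update_of_ne hj]
    exact hl hij

lemma succ_ne_last {n : ℕ} {k : Fin (n + 1)} (hk : k ≠ Fin.last n) :
    k.succ ≠ Fin.last (n + 1) := by
  intro h
  apply hk
  apply Fin.succ_injective
  rw [h, Fin.succ_last]

lemma strictMono_snoc {n : ℕ} {l : Fin (n + 1) → ℕ} (hl : StrictMono l) {b : ℕ}
    (hb : l (Fin.last n) < b) : StrictMono (Fin.snoc l b : Fin (n + 2) → ℕ) := by
  intro i j hij
  rcases Fin.eq_castSucc_or_eq_last j with ⟨j', rfl⟩ | rfl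
  · obtain ⟨i', rfl⟩ := Fin.exists_castSucc_eq.mpr (ne_of_lt (lt_of_lt_of_le hij (Fin.le_last _)))
    rw [Fin.snoc_castSucc, Fin.snoc_castSucc]
    exact hl (Fin.castSucc_lt_castSucc_iff.mp hij)
  · obtain ⟨i', rfl⟩ := Fin.exists_castSucc_eq.mpr (ne_of_lt hij)
    rw [Fin.snoc_castSucc, Fin.snoc_last]
    exact lt_of_le_of_lt (hl.monotone (Fin.le_last i')) hb

lemma sum_blocks (a : ℕ → ℤ) : ∀ (n : ℕ) (l : Fin (n + 1) → ℕ), Monotone l →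
    (∑ k : Fin n, ∑ i ∈ Finset.Ico (l k.castSucc) (l k.succ), a i)
      = ∑ i ∈ Finset.Ico (l 0) (l (Fin.last n)), a i := by
  intro n
  induction n with
  | zero => intro l _; simp
  | succ n ih =>
    intro l hl
    rw [Fin.sum_univ_castSucc]
    have h := ih (fun k => l k.castSucc) (fun i j hij => hl (Fin.castSucc_le_castSucc_iff.mpr hij))
    simp only [← Fin.succ_castSucc] at h
    rw [h]
    simp only [Fin.castSucc_zero, Fin.succ_last]
    exact Finset.sum_Ico_consecutive a (hl (Fin.zero_le _)) (hl (Fin.le_last _))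

/-! ### The structural claims -/

lemma claimB {t c : ℕ} {a : ℕ → ℤ} (ha : ∀ i, 1 ≤ i → i ≤ t + c + 2 → 1 ≤ a i)
    {ν : Fin (c + 1) → ℕ} (hν : ν ∈ Idl t c a) :
    Function.update ν (Fin.last c) (ν (Fin.last c) + (a (t + c + 2)).toNat)
      ∈ Idl (t + 1) c a := by
  obtain ⟨g, ⟨l, hl, hl0, hll, hg⟩, hνg'⟩ := hν
  have hνg : ∀ k, ν k ≤ g k := fun k => hνg' k
  set l' := Function.update l (Fin.last (c+1)) (t+c+3) with hl'def
  have hsm : StrictMono l' := strictMono_update_last hl (fun i _ => by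
    have := hl.monotone (Fin.le_last i); omega)
  refine ⟨fun k => ((∑ i ∈ Finset.Ico (l' k.castSucc) (l' k.succ), a i) - 1).toNat,
    ⟨l', hsm, ?_, ?_, fun k => rfl⟩, ?_⟩
  · rw [hl'def, Function.update_of_ne (by simp [Fin.ext_iff])]; exact hl0
  · rw [hl'def, Function.update_self]; omega
  · intro k
    dsimp only
    rcases eq_or_ne k (Fin.last c) with rfl | hk
    · rw [Function.update_self]
      have e1 : l' (Fin.last c).castSucc = l ((Fin.last c).castSucc) :=
        Function.update_of_ne (ne_of_lt (Fin.castSucc_lt_last _)) _ _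
      have e2 : l' ((Fin.last c).succ) = t+c+3 := by
        rw [Fin.succ_last]; exact Function.update_self _ _ _
      rw [e1, e2]
      set u := l ((Fin.last c).castSucc) with hu
      have hu1 : 1 ≤ u := by
        have h0 := hl.monotone (Fin.zero_le ((Fin.last c).castSucc))
        omega
      have hu2 : u < t+c+2 := by
        have h0 := hl (Fin.castSucc_lt_last (Fin.last c))
        omega
      have hsplit : ∑ i ∈ Finset.Ico u (t+c+3), a i
          = (∑ i ∈ Finset.Ico u (t+c+2), a i) + a (t+c+2) :=
        Finset.sum_Ico_succ_top (by omega) a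
      have hS : ((t+c+2-u : ℕ) : ℤ) ≤ ∑ i ∈ Finset.Ico u (t+c+2), a i :=
        sum_Ico_ge (N := t+c+1) (fun i h1 h2 => ha i h1 (by omega)) hu1 (le_refl _)
      have hlast : ν (Fin.last c) ≤ ((∑ i ∈ Finset.Ico u (t+c+2), a i) - 1).toNat := by
        have := hνg (Fin.last c)
        rw [hg (Fin.last c)] at this
        rw [Fin.succ_last, hll] at this
        exact this
      have haa : 1 ≤ a (t+c+2) := ha _ (by omega) (le_refl _)
      rw [hsplit]
      omega
    · rw [Function.update_of_ne hk]
      have e1 : l' k.castSucc = l k.castSucc :=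
        Function.update_of_ne (ne_of_lt (Fin.castSucc_lt_last _)) _ _
      have e2 : l' k.succ = l k.succ := Function.update_of_ne (succ_ne_last hk) _ _
      rw [e1, e2, ← hg k]
      exact hνg k

lemma claimA {t c : ℕ} {a : ℕ → ℤ} (ha : ∀ i, 1 ≤ i → i ≤ t + c + 2 → 1 ≤ a i)
    {μ : Fin (c + 1) → ℕ} (hμ : μ ∈ Idl (t + 1) c a)
    (hd : (a (t + c + 2)).toNat ≤ μ (Fin.last c)) :
    Function.update μ (Fin.last c) (μ (Fin.last c) - (a (t + c + 2)).toNat)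
      ∈ Idl t c a := by
  obtain ⟨g, ⟨l, hl, hl0, hll, hg⟩, hμg'⟩ := hμ
  have hμg : ∀ k, μ k ≤ g k := fun k => hμg' k
  have hll' : l (Fin.last (c+1)) = t+c+3 := by omega
  set u := l ((Fin.last c).castSucc) with hu
  have hu1 : 1 ≤ u := by
    have h0 := hl.monotone (Fin.zero_le ((Fin.last c).castSucc)); omega
  have hu3 : u < t+c+3 := by
    have h0 := hl (Fin.castSucc_lt_last (Fin.last c)); omega
  have hglast : g (Fin.last c) = ((∑ i ∈ Finset.Ico u (t+c+3), a i) - 1).toNat := by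
    rw [hg (Fin.last c), Fin.succ_last, hll']
  have haa : 1 ≤ a (t+c+2) := ha _ (by omega) (le_refl _)
  have hu2 : u < t+c+2 := by
    by_contra hcon
    have hueq : u = t+c+2 := by omega
    have hone : ∑ i ∈ Finset.Ico u (t+c+3), a i = a (t+c+2) := by
      rw [hueq, Finset.sum_Ico_succ_top (le_refl _)]
      simp
    have h1 := hμg (Fin.last c)
    rw [hglast, hone] at h1
    omega
  set l' := Function.update l (Fin.last (c+1)) (t+c+2) with hl'def
  have hsm : StrictMono l' := strictMono_update_last hl (fun i hi => by
    have h0 : l i ≤ u := by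
      apply hl.monotone
      have hi' : (i : ℕ) < c + 1 := hi
      have hv : (((Fin.last c).castSucc : Fin (c+2)) : ℕ) = c := rfl
      rw [Fin.le_def]
      omega
    omega)
  refine ⟨fun k => ((∑ i ∈ Finset.Ico (l' k.castSucc) (l' k.succ), a i) - 1).toNat,
    ⟨l', hsm, ?_, ?_, fun k => rfl⟩, ?_⟩
  · rw [hl'def, Function.update_of_ne (by simp [Fin.ext_iff])]; exact hl0
  · rw [hl'def, Function.update_self]
  · intro k
    dsimp only
    rcases eq_or_ne k (Fin.last c) with rfl | hk
    · rw [Function.update_self]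
      have e1 : l' (Fin.last c).castSucc = u :=
        Function.update_of_ne (ne_of_lt (Fin.castSucc_lt_last _)) _ _
      have e2 : l' ((Fin.last c).succ) = t+c+2 := by
        rw [Fin.succ_last]; exact Function.update_self _ _ _
      rw [e1, e2]
      have hsplit : ∑ i ∈ Finset.Ico u (t+c+3), a i
          = (∑ i ∈ Finset.Ico u (t+c+2), a i) + a (t+c+2) :=
        Finset.sum_Ico_succ_top (by omega) a
      have hS : ((t+c+2-u : ℕ) : ℤ) ≤ ∑ i ∈ Finset.Ico u (t+c+2), a i :=
        sum_Ico_ge (N := t+c+1) (fun i h1 h2 => ha i h1 (by omega)) hu1 (le_refl _)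
      have h1 := hμg (Fin.last c)
      rw [hglast, hsplit] at h1
      omega
    · rw [Function.update_of_ne hk]
      have e1 : l' k.castSucc = l k.castSucc :=
        Function.update_of_ne (ne_of_lt (Fin.castSucc_lt_last _)) _ _
      have e2 : l' k.succ = l k.succ := Function.update_of_ne (succ_ne_last hk) _ _
      rw [e1, e2, ← hg k]
      exact hμg k

lemma claimC {t c : ℕ} {a : ℕ → ℤ} (ha : ∀ i, 1 ≤ i → i ≤ t + c + 2 → 1 ≤ a i)
    {μ : Fin (c + 2) → ℕ} (hμ : μ ∈ Idl t (c + 1) a) :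
    Fin.init μ ∈ Idl t c a := by
  obtain ⟨g, ⟨l, hl, hl0, hll, hg⟩, hμg'⟩ := hμ
  have hμg : ∀ k, μ k ≤ g k := fun k => hμg' k
  have hll' : l (Fin.last (c+2)) = t+c+3 := hll
  set l' := Function.update (fun k : Fin (c+2) => l k.castSucc) (Fin.last (c+1)) (t+c+2)
    with hl'def
  have hbase : StrictMono (fun k : Fin (c+2) => l k.castSucc) :=
    hl.comp Fin.strictMono_castSucc
  have hw : l ((Fin.last (c+1)).castSucc) < t+c+3 := by
    have h0 := hl (Fin.castSucc_lt_last (Fin.last (c+1))); omega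
  have hsm : StrictMono l' := strictMono_update_last hbase (fun i hi => by
    have h1 : l i.castSucc < l ((Fin.last (c+1)).castSucc) :=
      hl (Fin.castSucc_lt_castSucc_iff.mpr hi)
    omega)
  refine ⟨fun k => ((∑ i ∈ Finset.Ico (l' k.castSucc) (l' k.succ), a i) - 1).toNat,
    ⟨l', hsm, ?_, ?_, fun k => rfl⟩, ?_⟩
  · rw [hl'def, Function.update_of_ne (by simp [Fin.ext_iff])]
    show l (Fin.castSucc 0) = 1
    rw [Fin.castSucc_zero]; exact hl0
  · rw [hl'def, Function.update_self]
  · intro k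
    dsimp only
    rcases eq_or_ne k (Fin.last c) with rfl | hk
    · have e1 : l' (Fin.last c).castSucc = l ((Fin.last c).castSucc).castSucc :=
        Function.update_of_ne (ne_of_lt (Fin.castSucc_lt_last _)) _ _
      have e2 : l' ((Fin.last c).succ) = t+c+2 := by
        rw [Fin.succ_last]; exact Function.update_self _ _ _
      rw [e1, e2]
      have h1 := hμg ((Fin.last c).castSucc)
      rw [hg ((Fin.last c).castSucc), Fin.succ_castSucc, Fin.succ_last] at h1
      set u := l ((Fin.last c).castSucc).castSucc with hudef
      set w := l ((Fin.last (c+1)).castSucc) with hwdef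
      have hu1 : 1 ≤ u := by
        have h0 := hl.monotone (Fin.zero_le (((Fin.last c).castSucc).castSucc)); omega
      have hm : ∑ i ∈ Finset.Ico u w, a i ≤ ∑ i ∈ Finset.Ico u (t+c+2), a i :=
        sum_Ico_mono (N := t+c+1) (fun i hi1 hi2 => ha i hi1 (by omega)) hu1 (by omega)
          (le_refl _)
      have h2 := Int.toNat_le_toNat (sub_le_sub_right hm 1)
      have hval : Fin.init μ (Fin.last c) = μ ((Fin.last c).castSucc) := rfl
      rw [hval]
      omega
    · have e1 : l' k.castSucc = l (k.castSucc).castSucc :=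
        Function.update_of_ne (ne_of_lt (Fin.castSucc_lt_last _)) _ _
      have e2 : l' k.succ = l (k.succ).castSucc :=
        Function.update_of_ne (succ_ne_last hk) _ _
      rw [e1, e2]
      have h1 := hμg (k.castSucc)
      rw [hg (k.castSucc), Fin.succ_castSucc] at h1
      exact h1

lemma claimD {t c : ℕ} {a : ℕ → ℤ} (ha : ∀ i, 1 ≤ i → i ≤ t + c + 2 → 1 ≤ a i)
    {ν : Fin (c + 1) → ℕ} (hν : ν ∈ Idl t c a) {r : ℕ} (hr : r < (a (t + c + 2)).toNat) :
    (Fin.snoc ν r : Fin (c + 2) → ℕ) ∈ Idl t (c + 1) a := by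
  obtain ⟨g, ⟨l, hl, hl0, hll, hg⟩, hνg'⟩ := hν
  have hνg : ∀ k, ν k ≤ g k := fun k => hνg' k
  set l' := (Fin.snoc l (t+c+3) : Fin (c+3) → ℕ) with hl'def
  have hsm : StrictMono l' := strictMono_snoc hl (by omega)
  refine ⟨fun k => ((∑ i ∈ Finset.Ico (l' k.castSucc) (l' k.succ), a i) - 1).toNat,
    ⟨l', hsm, ?_, ?_, fun k => rfl⟩, ?_⟩
  · show l' 0 = 1
    rw [hl'def, show (0 : Fin (c+3)) = ((0 : Fin (c+2)).castSucc) from (Fin.castSucc_zero).symm,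
      Fin.snoc_castSucc]
    exact hl0
  · rw [hl'def, Fin.snoc_last]; omega
  · intro k
    dsimp only
    rcases Fin.eq_castSucc_or_eq_last k with ⟨k', rfl⟩ | rfl
    · have hval : (Fin.snoc ν r : Fin (c+2) → ℕ) k'.castSucc = ν k' := Fin.snoc_castSucc _ _ _
      rw [hval]
      have e1 : l' (k'.castSucc).castSucc = l k'.castSucc := Fin.snoc_castSucc _ _ _
      have e2 : l' (k'.castSucc).succ = l k'.succ := by
        rw [Fin.succ_castSucc]; exact Fin.snoc_castSucc _ _ _
      rw [e1, e2, ← hg k']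
      exact hνg k'
    · have hval : (Fin.snoc ν r : Fin (c+2) → ℕ) (Fin.last (c+1)) = r := Fin.snoc_last _ _
      rw [hval]
      have e1 : l' ((Fin.last (c+1)).castSucc) = l (Fin.last (c+1)) := Fin.snoc_castSucc _ _ _
      have e2 : l' ((Fin.last (c+1)).succ) = t+c+3 := by
        rw [Fin.succ_last]; exact Fin.snoc_last _ _
      rw [e1, e2, hll]
      have hone : ∑ i ∈ Finset.Ico (t+c+2) (t+c+3), a i = a (t+c+2) := by
        rw [Finset.sum_Ico_succ_top (le_refl _)]; simp
      rw [hone]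
      omega

lemma hi_zero {c : ℕ} {a : ℕ → ℤ} (ha : ∀ i, 1 ≤ i → i ≤ c + 1 → 1 ≤ a i)
    {μ : Fin (c + 1) → ℕ} (hμ : μ ∈ Idl 0 c a) :
    μ (Fin.last c) < (a (c + 1)).toNat := by
  obtain ⟨g, ⟨l, hl, hl0, hll, hg⟩, hμg'⟩ := hμ
  have hμg : ∀ k, μ k ≤ g k := fun k => hμg' k
  have h1 := fin_sm_le hl ((Fin.last c).castSucc)
  have hc : (((Fin.last c).castSucc : Fin (c+2)) : ℕ) = c := rfl
  have h2 : l ((Fin.last c).castSucc) < l (Fin.last (c+1)) := hl (Fin.castSucc_lt_last _)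
  have hueq : l ((Fin.last c).castSucc) = c+1 := by omega
  have h3 := hμg (Fin.last c)
  rw [hg (Fin.last c), Fin.succ_last, hll, hueq] at h3
  have hone : ∑ i ∈ Finset.Ico (c+1) (0+c+2), a i = a (c+1) := by
    rw [show 0+c+2 = (c+1)+1 by omega, Finset.sum_Ico_succ_top (le_refl _)]
    simp
  rw [hone] at h3
  have haa := ha (c+1) (by omega) (le_refl _)
  omega

lemma mem_Idl_c0 {t : ℕ} {a : ℕ → ℤ} {μ : Fin 1 → ℕ} :
    μ ∈ Idl t 0 a ↔ μ 0 ≤ ((∑ i ∈ Finset.Ico 1 (t + 2), a i) - 1).toNat := by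
  constructor
  · rintro ⟨g, ⟨l, hl, hl0, hll, hg⟩, hμg'⟩
    have hμg : ∀ k, μ k ≤ g k := fun k => hμg' k
    have h := hμg 0
    rw [hg 0] at h
    have e0 : ((0 : Fin 1).castSucc : Fin 2) = 0 := rfl
    have e1 : ((0 : Fin 1).succ : Fin 2) = Fin.last 1 := rfl
    rw [e0, e1, hl0, hll] at h
    have hup : t + 0 + 2 = t + 2 := by omega
    rw [hup] at h
    exact h
  · intro h
    refine ⟨fun _ => ((∑ i ∈ Finset.Ico 1 (t + 2), a i) - 1).toNat,
      ⟨![1, t + 2], ?_, rfl, ?_, ?_⟩, ?_⟩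
    · intro i j hij
      fin_cases i <;> fin_cases j <;> simp_all <;> omega
    · show (t + 2 : ℕ) = t + 0 + 2
      omega
    · intro k
      have hk : k = 0 := Subsingleton.elim (α := Fin 1) k 0
      subst hk
      have e0 : (![1, t + 2] ((0 : Fin 1).castSucc) : ℕ) = 1 := rfl
      have e1 : (![1, t + 2] ((0 : Fin 1).succ) : ℕ) = t + 2 := rfl
      rw [e0, e1]
    · intro k
      have hk : k = 0 := Subsingleton.elim (α := Fin 1) k 0
      subst hk
      exact h

/-! ### Finiteness -/

lemma Idl_bdd {t c : ℕ} {a : ℕ → ℤ} {μ : Fin (c + 1) → ℕ} (hμ : μ ∈ Idl t c a)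
    (k : Fin (c + 1)) : μ k ≤ ∑ i ∈ Finset.Ico 1 (t + c + 2), (a i).toNat := by
  obtain ⟨g, ⟨l, hl, hl0, hll, hg⟩, hμg'⟩ := hμ
  have hμg : ∀ k, μ k ≤ g k := fun k => hμg' k
  have h := hμg k
  rw [hg k] at h
  refine le_trans h ?_
  have hsub : Finset.Ico (l k.castSucc) (l k.succ) ⊆ Finset.Ico 1 (t + c + 2) := by
    apply Finset.Ico_subset_Ico
    · have := hl.monotone (Fin.zero_le k.castSucc); omega
    · have := hl.monotone (Fin.le_last k.succ); omega
  have h1 : (∑ i ∈ Finset.Ico (l k.castSucc) (l k.succ), a i)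
      ≤ ((∑ i ∈ Finset.Ico (l k.castSucc) (l k.succ), (a i).toNat : ℕ) : ℤ) := by
    push_cast
    exact Finset.sum_le_sum (fun i _ => Int.self_le_toNat _)
  have h2 : (∑ i ∈ Finset.Ico (l k.castSucc) (l k.succ), (a i).toNat)
      ≤ ∑ i ∈ Finset.Ico 1 (t + c + 2), (a i).toNat :=
    Finset.sum_le_sum_of_subset hsub
  omega

lemma Idl_finite (t c : ℕ) (a : ℕ → ℤ) : (Idl t c a).Finite := by
  apply Set.Finite.subset
    (Set.Finite.pi (fun _ : Fin (c + 1) =>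
      Set.finite_Iic (∑ i ∈ Finset.Ico 1 (t + c + 2), (a i).toNat)))
  intro μ hμ k _
  exact Idl_bdd hμ k

lemma Gen_sum {t c : ℕ} {a : ℕ → ℤ} (ha : ∀ i, 1 ≤ i → i ≤ t + c + 1 → 1 ≤ a i)
    {g : Fin (c + 1) → ℕ} (hg : g ∈ Gen t c a) :
    ((∑ k, g k : ℕ) : ℤ) = (∑ i ∈ Finset.Ico 1 (t + c + 2), a i) - (c + 1) := by
  obtain ⟨l, hl, hl0, hll, hgk⟩ := hg
  have hblocks := sum_blocks a (c + 1) l hl.monotone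
  rw [hl0, hll] at hblocks
  have hcast : ∀ k : Fin (c + 1),
      ((g k : ℕ) : ℤ) = (∑ i ∈ Finset.Ico (l k.castSucc) (l k.succ), a i) - 1 := by
    intro k
    rw [hgk k]
    have hok : 1 ≤ l k.castSucc := by have := hl.monotone (Fin.zero_le k.castSucc); omega
    have hup : l k.succ ≤ t + c + 2 := by have := hl.monotone (Fin.le_last k.succ); omega
    have hlt : l k.castSucc < l k.succ := hl Fin.castSucc_lt_succ
    have hge := sum_Ico_ge (N := t + c + 1) (fun i h1 h2 => ha i h1 h2) hok hup
    rw [Int.toNat_of_nonneg (by omega)]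
  push_cast
  rw [Finset.sum_congr rfl (fun k _ => hcast k), Finset.sum_sub_distrib, hblocks]
  simp

noncomputable def GammaF (t c : ℕ) (a : ℕ → ℤ) : Finset (Fin (c + 1) → ℕ) :=
  (Idl_finite t c a).toFinset

lemma mem_GammaF {t c : ℕ} {a : ℕ → ℤ} {μ : Fin (c + 1) → ℕ} :
    μ ∈ GammaF t c a ↔ μ ∈ Idl t c a := Set.Finite.mem_toFinset _

noncomputable def gf (t c : ℕ) (a : ℕ → ℤ) : Polynomial ℤ :=
  ∑ μ ∈ GammaF t c a, Polynomial.X ^ (∑ k, μ k)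

lemma sum_update_last {n : ℕ} (f : Fin (n + 1) → ℕ) (b : ℕ) :
    ∑ k, Function.update f (Fin.last n) b k = (∑ k : Fin n, f k.castSucc) + b := by
  rw [Fin.sum_univ_castSucc, Function.update_self]
  exact congrArg (· + b) (Finset.sum_congr rfl
    (fun k _ => Function.update_of_ne (ne_of_lt (Fin.castSucc_lt_last k)) _ _))

open Polynomial in
lemma hi_sum {t c : ℕ} {a : ℕ → ℤ} (N : ℕ) (hN : N = t + c + 2)
    (ha : ∀ i, 1 ≤ i → i ≤ t + c + 2 → 1 ≤ a i) :
    ∑ μ ∈ (GammaF (t + 1) c a).filter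
        (fun μ => (a N).toNat ≤ μ (Fin.last c)),
      (Polynomial.X : Polynomial ℤ) ^ (∑ k, μ k)
    = Polynomial.X ^ (a N).toNat * gf t c a := by
  subst hN
  rw [gf, Finset.mul_sum]
  refine Finset.sum_nbij'
    (fun μ => Function.update μ (Fin.last c) (μ (Fin.last c) - (a (t + c + 2)).toNat))
    (fun ν => Function.update ν (Fin.last c) (ν (Fin.last c) + (a (t + c + 2)).toNat))
    ?_ ?_ ?_ ?_ ?_
  · intro μ hμ
    rw [Finset.mem_filter] at hμ
    exact mem_GammaF.mpr (claimA ha (mem_GammaF.mp hμ.1) hμ.2)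
  · intro ν hν
    rw [Finset.mem_filter]
    refine ⟨mem_GammaF.mpr (claimB ha (mem_GammaF.mp hν)), ?_⟩
    show (a (t+c+2)).toNat ≤
      Function.update ν (Fin.last c) (ν (Fin.last c) + (a (t + c + 2)).toNat) (Fin.last c)
    rw [Function.update_self]
    omega
  · intro μ hμ
    rw [Finset.mem_filter] at hμ
    simp only [Function.update_idem, Function.update_self]
    rw [Nat.sub_add_cancel hμ.2, Function.update_eq_self]
  · intro ν _
    simp only [Function.update_idem, Function.update_self]
    rw [Nat.add_sub_cancel, Function.update_eq_self]
  · intro μ hμ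
    rw [Finset.mem_filter] at hμ
    rw [← pow_add]
    congr 1
    rw [sum_update_last, Fin.sum_univ_castSucc (f := μ)]
    omega

open Polynomial in
lemma lo_sum {t c : ℕ} {a : ℕ → ℤ} (N : ℕ) (hN : N = t + c + 2)
    (ha : ∀ i, 1 ≤ i → i ≤ t + c + 2 → 1 ≤ a i) :
    ∑ μ ∈ (GammaF t (c + 1) a).filter
        (fun μ => ¬ (a N).toNat ≤ μ (Fin.last (c + 1))),
      (Polynomial.X : Polynomial ℤ) ^ (∑ k, μ k)
    = geom (a N) * gf t c a := by
  subst hN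
  rw [geom, gf, Finset.sum_mul_sum, ← Finset.sum_product']
  refine Finset.sum_nbij'
    (fun μ => (μ (Fin.last (c + 1)), Fin.init μ))
    (fun p => Fin.snoc p.2 p.1)
    ?_ ?_ ?_ ?_ ?_
  · intro μ hμ
    rw [Finset.mem_filter] at hμ
    rw [Finset.mem_product]
    dsimp only
    exact ⟨Finset.mem_range.mpr (by omega), mem_GammaF.mpr (claimC ha (mem_GammaF.mp hμ.1))⟩
  · rintro ⟨r, ν⟩ hrv
    rw [Finset.mem_product, Finset.mem_range] at hrv
    dsimp only at hrv
    rw [Finset.mem_filter]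
    dsimp only
    refine ⟨mem_GammaF.mpr (claimD ha (mem_GammaF.mp hrv.2) hrv.1), ?_⟩
    rw [Fin.snoc_last]
    omega
  · intro μ _
    exact Fin.snoc_init_self μ
  · rintro ⟨r, ν⟩ _
    dsimp only
    rw [Fin.snoc_last, Fin.init_snoc]
  · intro μ _
    dsimp only
    rw [← pow_add]
    congr 1
    rw [Fin.sum_univ_castSucc (f := μ)]
    have hinit : ∀ k : Fin (c + 1), Fin.init μ k = μ k.castSucc := fun k => rfl
    rw [Finset.sum_congr rfl (fun k _ => hinit k)]
    omega

open Polynomial in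
lemma lo_c0 {t : ℕ} {a : ℕ → ℤ} (N : ℕ) (hN : N = t + 1)
    (ha : ∀ i, 1 ≤ i → i ≤ t + 1 → 1 ≤ a i) :
    ∑ μ ∈ (GammaF t 0 a).filter
        (fun μ => ¬ (a N).toNat ≤ μ (Fin.last 0)),
      (Polynomial.X : Polynomial ℤ) ^ (∑ k, μ k)
    = geom (a N) := by
  subst hN
  rw [geom]
  have haa : 1 ≤ a (t + 1) := ha _ (by omega) (le_refl _)
  have hsplit : ∑ i ∈ Finset.Ico 1 (t + 2), a i
      = (∑ i ∈ Finset.Ico 1 (t + 1), a i) + a (t + 1) :=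
    Finset.sum_Ico_succ_top (by omega) a
  have hge : ((t + 1 - 1 : ℕ) : ℤ) ≤ ∑ i ∈ Finset.Ico 1 (t + 1), a i :=
    sum_Ico_ge (N := t) (fun i h1 h2 => ha i h1 (by omega)) (le_refl _) (le_refl _)
  refine Finset.sum_nbij' (fun μ => μ 0) (fun r => fun _ => r) ?_ ?_ ?_ ?_ ?_
  · intro μ hμ
    rw [Finset.mem_filter] at hμ
    have h0 : Fin.last 0 = 0 := rfl
    rw [Finset.mem_range]
    rw [h0] at hμ
    omega
  · intro r hr
    rw [Finset.mem_range] at hr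
    rw [Finset.mem_filter]
    constructor
    · rw [mem_GammaF, mem_Idl_c0]
      omega
    · show ¬ (a (t + 1)).toNat ≤ r
      omega
  · intro μ hμ
    funext k
    have hk : k = 0 := Subsingleton.elim (α := Fin 1) k 0
    rw [hk]
  · intro r _
    rfl
  · intro μ _
    exact congrArg (fun n => (Polynomial.X : Polynomial ℤ) ^ n) (Fin.sum_univ_one μ)

lemma hi_empty {c : ℕ} {a : ℕ → ℤ} (N : ℕ) (hN : N = c + 1)
    (ha : ∀ i, 1 ≤ i → i ≤ c + 1 → 1 ≤ a i) :
    (GammaF 0 c a).filter (fun μ => (a N).toNat ≤ μ (Fin.last c)) = ∅ := by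
  subst hN
  rw [Finset.filter_eq_empty_iff]
  intro μ hμ
  simp only [not_le]
  exact hi_zero ha (mem_GammaF.mp hμ)

lemma hp_zero (m : ℕ) (A : Matrix (Fin 0) (Fin m) ℤ) : hp 0 m A = 0 := by
  rw [hp]

lemma hp_wide (t : ℕ) (A : Matrix (Fin (t + 1)) (Fin t) ℤ) : hp (t + 1) t A = 1 := by
  cases t with
  | zero => rw [hp]
  | succ s => rw [hp, if_pos (by omega)]

lemma hp_eq_gf : ∀ (n t c : ℕ), t + c = n → ∀ (a : ℕ → ℤ),
    (∀ i, 1 ≤ i → i ≤ t + c + 1 → 1 ≤ a i) →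
    ∀ (m : ℕ), m = t + c + 1 → ∀ (A : Matrix (Fin (t + 1)) (Fin m) ℤ),
    (∀ (i : Fin (t + 1)) (j : Fin m), A i j = a ((j : ℕ) + 1)) →
    hp (t + 1) m A = gf t c a := by
  intro n
  induction n using Nat.strong_induction_on with
  | _ n IH =>
    intro t c htc a ha m hm A hA
    subst hm
    rw [hp, if_neg (by omega)]
    have hlast : A (Fin.last t) (Fin.last (t + c)) = a (t + c + 1) := by
      rw [hA, Fin.val_last]
    rw [hlast]
    have hgf : gf t c a =
        (∑ μ ∈ (GammaF t c a).filter
          (fun μ => (a (t + c + 1)).toNat ≤ μ (Fin.last c)),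
            (Polynomial.X : Polynomial ℤ) ^ (∑ k, μ k)) +
        (∑ μ ∈ (GammaF t c a).filter
          (fun μ => ¬ (a (t + c + 1)).toNat ≤ μ (Fin.last c)),
            (Polynomial.X : Polynomial ℤ) ^ (∑ k, μ k)) :=
      (Finset.sum_filter_add_sum_filter_not (GammaF t c a)
        (fun μ => (a (t + c + 1)).toNat ≤ μ (Fin.last c)) _).symm
    rw [hgf]
    rcases t with _ | t'
    · -- t = 0
      erw [hp_zero]
      rw [hi_empty (N := 0 + c + 1) (by omega) (fun i h1 h2 => ha i h1 (by omega)),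
        Finset.sum_empty]
      rcases c with _ | c'
      · -- t = 0, c = 0
        erw [hp_wide]
        rw [lo_c0 (N := 0 + 0 + 1) (by omega) (fun i h1 h2 => ha i h1 (by omega))]
        ring
      · -- t = 0, c = c' + 1
        rw [lo_sum (N := 0 + (c' + 1) + 1) (by omega) (fun i h1 h2 => ha i h1 (by omega)),
          IH (0 + c') (by omega) 0 c' rfl a (fun i h1 h2 => ha i h1 (by omega))
            (0 + (c' + 1)) (by omega) (fun i j => A i j.castSucc)
            (fun i j => hA i j.castSucc)]
        ring
    · -- t = t' + 1
      rw [hi_sum (N := t' + 1 + c + 1) (by omega) (fun i h1 h2 => ha i h1 (by omega)),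
        IH (t' + c) (by omega) t' c rfl a (fun i h1 h2 => ha i h1 (by omega))
          (t' + 1 + c) (by omega) (fun i j => A i.castSucc j.castSucc)
          (fun i j => hA i.castSucc j.castSucc)]
      congr 1
      rcases c with _ | c'
      · -- c = 0
        erw [hp_wide, mul_one]
        exact (lo_c0 (N := t' + 1 + 0 + 1) (by omega)
          (fun i h1 h2 => ha i h1 (by omega))).symm
      · -- c = c' + 1
        rw [lo_sum (N := t' + 1 + (c' + 1) + 1) (by omega)
          (fun i h1 h2 => ha i h1 (by omega)),
          IH (t' + 1 + c') (by omega) (t' + 1) c' rfl a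
            (fun i h1 h2 => ha i h1 (by omega))
            (t' + 1 + (c' + 1)) (by omega) (fun i j => A i j.castSucc)
            (fun i j => hA i j.castSucc)]

lemma Gen_nonempty (t c : ℕ) (a : ℕ → ℤ) : ∃ g, g ∈ Gen t c a := by
  set l₀ : Fin (c + 2) → ℕ :=
    fun k => if k = Fin.last (c + 1) then t + c + 2 else (k : ℕ) + 1 with hl₀
  have h0ne : (0 : Fin (c + 2)) ≠ Fin.last (c + 1) := by simp [Fin.ext_iff]
  refine ⟨fun k => ((∑ i ∈ Finset.Ico (l₀ k.castSucc) (l₀ k.succ), a i) - 1).toNat,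
    l₀, ?_, ?_, ?_, fun k => rfl⟩
  · intro i j hij
    rw [hl₀]
    dsimp only
    rcases eq_or_ne j (Fin.last (c + 1)) with rfl | hj
    · rw [if_pos rfl, if_neg (ne_of_lt hij)]
      have hi : (i : ℕ) < c + 1 := hij
      omega
    · have hjl : j < Fin.last (c + 1) := lt_of_le_of_ne (Fin.le_last j) hj
      rw [if_neg hj, if_neg (ne_of_lt (lt_trans hij hjl))]
      have : (i : ℕ) < (j : ℕ) := hij
      omega
  · rw [hl₀]
    dsimp only
    rw [if_neg h0ne]
    simp
  · rw [hl₀]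
    dsimp only
    rw [if_pos rfl]

open Polynomial in
lemma coeff_sum_X_pow {α : Type*} (s : Finset α) (f : α → ℕ) (i : ℕ) :
    (∑ μ ∈ s, (Polynomial.X : Polynomial ℤ) ^ (f μ)).coeff i
      = ((s.filter fun μ => f μ = i).card : ℤ) := by
  classical
  rw [Polynomial.finset_sum_coeff]
  rw [Finset.sum_congr rfl (fun μ _ => Polynomial.coeff_X_pow (f μ) i)]
  rw [Finset.sum_boole]
  have hf : Finset.filter (fun x => i = f x) s = Finset.filter (fun μ => f μ = i) s :=
    Finset.filter_congr (fun μ _ => by simp [eq_comm])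
  rw [hf]


lemma gf_coeff (t c : ℕ) (a : ℕ → ℤ) (i : ℕ) :
    (gf t c a).coeff i = (((GammaF t c a).filter fun μ => ∑ k, μ k = i).card : ℤ) :=
  coeff_sum_X_pow _ _ _

/-- For a degree matrix `A ∈ ℤ^{(t+1)×(t+c+1)}` (codimension `c+1`) with all rows equal to
`(a_1,…,a_{t+c+1})`, the h-polynomial of `A` is the generating function `Σ_i f_i(Γ) z^i`
of the pure order ideal `Γ` of monomials in `c+1` variables generated by the monomials
`y_1^{(Σ_{i=1}^{l_1-1} a_i)-1} ⋯ y_{c+1}^{(Σ_{i=l_c}^{t+c+1} a_i)-1}` over all sequences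
`1 = l_0 < l_1 < ⋯ < l_c ≤ t+c+1`; moreover `Γ` is pure (every maximal monomial of `Γ` has
degree `deg hp^A`). In particular the h-vector of `A` is a pure O-sequence. -/
theorem hp_equal_rows_pure_O_sequence (t c : ℕ)
    (A : Matrix (Fin (t + 1)) (Fin (t + c + 1)) ℤ) (hA : IsDegreeMatrix A)
    (heq : ∀ (i i' : Fin (t + 1)) (j : Fin (t + c + 1)), A i j = A i' j) :
    ∀ aZ : ℕ → ℤ, (aZ = fun i => if h : 1 ≤ i ∧ i - 1 < t + c + 1 then A 0 ⟨i - 1, h.2⟩ else 0) →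
    ∀ G : Set (Fin (c + 1) → ℕ),
      (G = {μ | ∃ l : Fin (c + 2) → ℕ, StrictMono l ∧ l 0 = 1 ∧
        l (Fin.last (c + 1)) = t + c + 2 ∧
        ∀ k : Fin (c + 1),
          μ k = ((∑ i ∈ Finset.Ico (l k.castSucc) (l k.succ), aZ i) - 1).toNat}) →
    ∀ Γ : Set (Fin (c + 1) → ℕ), (Γ = {μ | ∃ g ∈ G, μ ≤ g}) →
      (∀ i : ℕ, (hp (t + 1) (t + c + 1) A).coeff i =
          ({μ ∈ Γ | ∑ k, μ k = i}.ncard : ℤ)) ∧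
        ∀ μ ∈ Γ, (∀ ν ∈ Γ, μ ≤ ν → μ = ν) →
          ∑ k, μ k = (hp (t + 1) (t + c + 1) A).natDegree := by
  intro aZ haZ G hG Γ hΓ
  have hA1 : ∀ (i : Fin (t + 1)) (j : Fin (t + c + 1)), A i j = aZ ((j : ℕ) + 1) := by
    intro i j
    rw [haZ]
    dsimp only
    rw [dif_pos (show 1 ≤ (j : ℕ) + 1 ∧ (j : ℕ) + 1 - 1 < t + c + 1 from
      ⟨by omega, by omega⟩)]
    have hj : (⟨(j : ℕ) + 1 - 1, by omega⟩ : Fin (t + c + 1)) = j := by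
      apply Fin.ext; simp
    rw [hj]
    exact heq i 0 j
  have haP : ∀ i, 1 ≤ i → i ≤ t + c + 1 → 1 ≤ aZ i := by
    intro i h1 h2
    rw [haZ]
    dsimp only
    rw [dif_pos (show 1 ≤ i ∧ i - 1 < t + c + 1 from ⟨h1, by omega⟩)]
    have ht0 : (0 : ℕ) < t + c + 1 := by omega
    have hd : 0 < A 0 ⟨0, ht0⟩ := by simpa using hA.2.2.2 0 (by simp)
    have hmono := hA.2.1 0 ⟨0, ht0⟩ ⟨i - 1, by omega⟩ (Fin.mk_le_mk.mpr (by omega))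
    exact le_trans (by omega) hmono
  have hhp : hp (t + 1) (t + c + 1) A = gf t c aZ :=
    hp_eq_gf (t + c) t c rfl aZ haP (t + c + 1) rfl A hA1
  have hΓI : Γ = Idl t c aZ := by rw [hΓ, hG]; rfl
  constructor
  · intro i
    rw [hhp, gf_coeff]
    have hset : {μ ∈ Γ | ∑ k, μ k = i}
        = ↑((GammaF t c aZ).filter (fun μ => ∑ k, μ k = i)) := by
      ext ν
      simp only [Set.mem_setOf_eq, Finset.coe_filter, hΓI, mem_GammaF]
    rw [hset, Set.ncard_coe_finset]
  · intro μ hμ hmax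
    have hμ' := hμ
    rw [hΓI] at hμ'
    obtain ⟨g, hgGen, hμg⟩ := hμ'
    have hgΓ : g ∈ Γ := by rw [hΓI]; exact ⟨g, hgGen, le_refl g⟩
    have hμeq : μ = g := hmax g hgΓ hμg
    subst hμeq
    obtain ⟨g₀, hg₀⟩ := Gen_nonempty t c aZ
    have hsum_g := Gen_sum haP hgGen
    have hsum_g₀ := Gen_sum haP hg₀
    have hg₀mem : g₀ ∈ GammaF t c aZ := mem_GammaF.mpr ⟨g₀, hg₀, le_refl _⟩
    have hcoeffD : (hp (t + 1) (t + c + 1) A).coeff (∑ k, g₀ k) ≠ 0 := by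
      rw [hhp, gf_coeff]
      have hmem : g₀ ∈ (GammaF t c aZ).filter (fun ν => ∑ k, ν k = ∑ k, g₀ k) := by
        rw [Finset.mem_filter]; exact ⟨hg₀mem, rfl⟩
      exact Nat.cast_ne_zero.mpr (Finset.card_ne_zero_of_mem hmem)
    have hcoeff0 : ∀ j, ∑ k, g₀ k < j → (hp (t + 1) (t + c + 1) A).coeff j = 0 := by
      intro j hj
      rw [hhp, gf_coeff]
      have hempty : (GammaF t c aZ).filter (fun ν => ∑ k, ν k = j) = ∅ := by
        rw [Finset.filter_eq_empty_iff]
        intro ν hν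
        obtain ⟨g', hg', hνg'⟩ := mem_GammaF.mp hν
        have h1 : ∑ k, ν k ≤ ∑ k, g' k := Finset.sum_le_sum (fun k _ => hνg' k)
        have h2 := Gen_sum haP hg'
        omega
      rw [hempty]
      simp
    have hnd : (hp (t + 1) (t + c + 1) A).natDegree = ∑ k, g₀ k := by
      apply le_antisymm
      · rw [Polynomial.natDegree_le_iff_coeff_eq_zero]
        intro j hj
        exact hcoeff0 j hj
      · exact Polynomial.le_natDegree_of_ne_zero hcoeffD
    rw [hnd]
    omega
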